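/- Let 1 < δ < p < q < r and A, B, D > 0. Define m(t) = A t^{p-δ} + B t^{q-δ} - D t^{r-δ} for t ≥ 0. Then there exists a unique t_max > 0 such that m is strictly increasing on (0, t_max) and strictly decreasing on (t_max, ∞); in particular m'(t_max) = 0, m(t_max) > 0, m(t) → -∞ as t → ∞. -/

import Mathlib

open Filter Set Real

theorem stmt_4 (p q r δ A B D : ℝ)
    (hδ : 1 < δ) (hδp : δ < p) (hpq : p < q) (hqr : q < r)
    (hA : 0 < A) (hB : 0 < B) (hD : 0 < D)
    (m : ℝ → ℝ)
    (hm : ∀ t, m t = A * t ^ (p - δ) + B * t ^ (q - δ) - D * t ^ (r - δ)) :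
    ∃ tmax : ℝ, 0 < tmax ∧
      StrictMonoOn m (Set.Ioc 0 tmax) ∧
      StrictAntiOn m (Set.Ici tmax) ∧
      deriv m tmax = 0 ∧
      0 < m tmax ∧
      Filter.Tendsto m Filter.atTop Filter.atBot ∧
      ∀ t' : ℝ, 0 < t' → StrictMonoOn m (Set.Ioc 0 t') →
        StrictAntiOn m (Set.Ici t') → t' = tmax := by
  have hmfun : m = fun t => A * t ^ (p - δ) + B * t ^ (q - δ) - D * t ^ (r - δ) := funext hm
  set a := A * (p - δ) with ha_def
  set b := B * (q - δ) with hb_def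
  set d := D * (r - δ) with hd_def
  have ha : 0 < a := mul_pos hA (by linarith)
  have hb : 0 < b := mul_pos hB (by linarith)
  have hd : 0 < d := mul_pos hD (by linarith)
  set k : ℝ → ℝ := fun t => a * t ^ (p - r) + b * t ^ (q - r) - d with hk_def
  have hpr : p - r < 0 := by linarith
  have hqrneg : q - r < 0 := by linarith
  -- k is strictly antitone on (0,∞)
  have hkanti : StrictAntiOn k (Set.Ioi 0) := by
    intro x hx y hy hxy
    have h1 : y ^ (p - r) < x ^ (p - r) := Real.rpow_lt_rpow_of_neg hx hxy hpr
    have h2 : y ^ (q - r) < x ^ (q - r) := Real.rpow_lt_rpow_of_neg hx hxy hqrneg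
    simp only [hk_def]
    nlinarith
  -- k → atTop as t → 0+
  have hk0 : Tendsto k (nhdsWithin 0 (Set.Ioi 0)) atTop := by
    have h1 : Tendsto (fun t : ℝ => t ^ (p - r)) (nhdsWithin 0 (Set.Ioi 0)) atTop := by
      have := (tendsto_rpow_atTop (y := r - p) (by linarith)).comp tendsto_inv_nhdsGT_zero
      refine this.congr' ?_
      filter_upwards [self_mem_nhdsWithin] with t ht
      have ht : (0:ℝ) < t := ht
      simp only [Function.comp]
      rw [← Real.rpow_neg_one t, ← Real.rpow_mul ht.le]
      norm_num
    have h2 : Tendsto (fun t : ℝ => a * t ^ (p - r) - d) (nhdsWithin 0 (Set.Ioi 0)) atTop :=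
      (h1.const_mul_atTop ha).atTop_add tendsto_const_nhds
    refine tendsto_atTop_mono' _ ?_ h2
    filter_upwards [self_mem_nhdsWithin] with t ht
    have : 0 ≤ b * t ^ (q - r) := mul_nonneg hb.le (Real.rpow_nonneg (le_of_lt ht) _)
    simp only [hk_def]; linarith
  -- k → -d as t → ∞
  have hkinf : Tendsto k atTop (nhds (a * 0 + b * 0 - d)) := by
    have h1 : Tendsto (fun t : ℝ => t ^ (p - r)) atTop (nhds 0) := by
      have := tendsto_rpow_neg_atTop (y := r - p) (by linarith)
      convert this using 2 with t
      ring_nf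
    have h2 : Tendsto (fun t : ℝ => t ^ (q - r)) atTop (nhds 0) := by
      have := tendsto_rpow_neg_atTop (y := r - q) (by linarith)
      convert this using 2 with t
      ring_nf
    exact ((h1.const_mul a).add (h2.const_mul b)).sub tendsto_const_nhds
  -- k is continuous at positive points
  have hkc : ∀ t : ℝ, 0 < t → ContinuousAt k t := by
    intro t ht
    have h1 := Real.continuousAt_rpow_const t (p - r) (Or.inl ht.ne')
    have h2 := Real.continuousAt_rpow_const t (q - r) (Or.inl ht.ne')
    exact ((h1.const_mul a).add (h2.const_mul b)).sub continuousAt_const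
  -- find t0 > 0 with k t0 > 0
  obtain ⟨t0, hkt0, ht0⟩ : ∃ t0, 0 < k t0 ∧ t0 ∈ Set.Ioi (0:ℝ) :=
    ((hk0.eventually (eventually_gt_atTop 0)).and self_mem_nhdsWithin).exists
  have ht0 : (0:ℝ) < t0 := ht0
  -- find t1 > t0 with k t1 < 0
  obtain ⟨t1, hkt1, ht01⟩ : ∃ t1, k t1 < 0 ∧ t0 < t1 := by
    have hneg : a * 0 + b * 0 - d < 0 := by linarith
    exact ((hkinf.eventually (eventually_lt_nhds hneg)).and (eventually_gt_atTop t0)).exists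
  have ht1 : (0:ℝ) < t1 := ht0.trans ht01
  -- IVT : root of k
  obtain ⟨tmax, htmem, hktmax⟩ : ∃ tmax ∈ Set.Icc t0 t1, k tmax = 0 := by
    have hconn : ContinuousOn k (Set.Icc t0 t1) := fun x hx =>
      (hkc x (lt_of_lt_of_le ht0 hx.1)).continuousWithinAt
    have := intermediate_value_Icc' (le_of_lt ht01) hconn (a := t0) (b := t1)
      (Set.mem_Icc.2 ⟨le_of_lt hkt1, le_of_lt hkt0⟩)
    obtain ⟨c, hc, hc0⟩ := this
    exact ⟨c, hc, hc0⟩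
  have htmax : (0:ℝ) < tmax := lt_of_lt_of_le ht0 htmem.1
  -- sign of k on each side
  have hkpos : ∀ t : ℝ, 0 < t → t < tmax → 0 < k t := fun t ht htlt => by
    have := hkanti ht (Set.mem_Ioi.2 htmax) htlt
    rwa [hktmax] at this
  have hkneg : ∀ t : ℝ, tmax < t → k t < 0 := fun t htlt => by
    have := hkanti (Set.mem_Ioi.2 htmax) (Set.mem_Ioi.2 (htmax.trans htlt)) htlt
    rwa [hktmax] at this
  -- derivative of m
  have hderiv : ∀ t : ℝ, 0 < t → HasDerivAt m (t ^ (r - δ - 1) * k t) t := by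
    intro t ht
    have h1 := (Real.hasDerivAt_rpow_const (x := t) (p := p - δ) (Or.inl ht.ne')).const_mul A
    have h2 := (Real.hasDerivAt_rpow_const (x := t) (p := q - δ) (Or.inl ht.ne')).const_mul B
    have h3 := (Real.hasDerivAt_rpow_const (x := t) (p := r - δ) (Or.inl ht.ne')).const_mul D
    have h := (h1.add h2).sub h3
    rw [hmfun]
    convert h using 1
    · rfl
    · rfl
    · rfl
    have e1 : t ^ (r - δ - 1) * t ^ (p - r) = t ^ (p - δ - 1) := by
      rw [← Real.rpow_add ht]; ring_nf
    have e2 : t ^ (r - δ - 1) * t ^ (q - r) = t ^ (q - δ - 1) := by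
      rw [← Real.rpow_add ht]; ring_nf
    simp only [hk_def, ha_def, hb_def, hd_def]
    nlinarith [e1, e2]
  -- continuity of m at positive points
  have hmc : ∀ t : ℝ, 0 < t → ContinuousAt m t := fun t ht => (hderiv t ht).continuousAt
  -- strict monotonicity on (0, tmax]
  have hmono : StrictMonoOn m (Set.Ioc 0 tmax) := by
    apply strictMonoOn_of_deriv_pos (convex_Ioc 0 tmax)
    · exact fun x hx => (hmc x hx.1).continuousWithinAt
    · intro x hx
      rw [interior_Ioc] at hx
      rw [(hderiv x hx.1).deriv]
      exact mul_pos (Real.rpow_pos_of_pos hx.1 _) (hkpos x hx.1 hx.2)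
  -- strict antitonicity on [tmax, ∞)
  have hanti : StrictAntiOn m (Set.Ici tmax) := by
    apply strictAntiOn_of_deriv_neg (convex_Ici tmax)
    · exact fun x hx => (hmc x (lt_of_lt_of_le htmax hx)).continuousWithinAt
    · intro x hx
      rw [interior_Ici] at hx
      rw [(hderiv x (htmax.trans hx)).deriv]
      exact mul_neg_of_pos_of_neg (Real.rpow_pos_of_pos (htmax.trans hx) _) (hkneg x hx)
  -- m → 0 at 0+
  have hm0 : Tendsto m (nhdsWithin 0 (Set.Ioi 0)) (nhds 0) := by
    have h1 : Tendsto (fun t : ℝ => t ^ (p - δ)) (nhds 0) (nhds 0) := by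
      have := (Real.continuousAt_rpow_const 0 (p - δ) (Or.inr (by linarith))).tendsto
      rwa [Real.zero_rpow (by intro hc; linarith : p - δ ≠ 0)] at this
    have h2 : Tendsto (fun t : ℝ => t ^ (q - δ)) (nhds 0) (nhds 0) := by
      have := (Real.continuousAt_rpow_const 0 (q - δ) (Or.inr (by linarith))).tendsto
      rwa [Real.zero_rpow (by intro hc; linarith : q - δ ≠ 0)] at this
    have h3 : Tendsto (fun t : ℝ => t ^ (r - δ)) (nhds 0) (nhds 0) := by
      have := (Real.continuousAt_rpow_const 0 (r - δ) (Or.inr (by linarith))).tendsto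
      rwa [Real.zero_rpow (by intro hc; linarith : r - δ ≠ 0)] at this
    have hton : Tendsto m (nhds 0) (nhds (A * 0 + B * 0 - D * 0)) := by
      rw [hmfun]
      exact ((h1.const_mul A).add (h2.const_mul B)).sub (h3.const_mul D)
    simpa using hton.mono_left nhdsWithin_le_nhds
  -- nonnegativity below tmax
  have hge0 : ∀ c : ℝ, c ∈ Set.Ioc 0 tmax → 0 ≤ m c := by
    intro c hc
    refine le_of_tendsto hm0 ?_
    filter_upwards [Ioo_mem_nhdsGT_of_mem (Set.mem_Ico.2 ⟨le_refl 0, hc.1⟩)] with t ht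
    exact le_of_lt (hmono ⟨ht.1, le_trans (le_of_lt ht.2) hc.2⟩ hc ht.2)
  have hmpos : 0 < m tmax := by
    have h2 : tmax / 2 ∈ Set.Ioc 0 tmax := ⟨by linarith, by linarith⟩
    have := hmono h2 (Set.mem_Ioc.2 ⟨htmax, le_refl _⟩) (by linarith)
    linarith [hge0 _ h2]
  -- m → -∞
  have hbot : Tendsto m atTop atBot := by
    have hg : Tendsto (fun t : ℝ => -(t ^ (q - δ))) atTop atBot :=
      tendsto_neg_atTop_atBot.comp (tendsto_rpow_atTop (by linarith : (0:ℝ) < q - δ))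
    refine tendsto_atBot_mono' atTop ?_ hg
    have hDrq : Tendsto (fun t : ℝ => D * t ^ (r - q)) atTop atTop :=
      (tendsto_rpow_atTop (by linarith : (0:ℝ) < r - q)).const_mul_atTop hD
    filter_upwards [eventually_ge_atTop 1, hDrq.eventually (eventually_ge_atTop (A + B + 1))]
      with t ht1 htD
    have ht : (0:ℝ) < t := lt_of_lt_of_le one_pos ht1
    have e1 : t ^ (p - δ) ≤ t ^ (q - δ) := Real.rpow_le_rpow_of_exponent_le ht1 (by linarith)
    have e2 : t ^ (r - δ) = t ^ (r - q) * t ^ (q - δ) := by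
      rw [← Real.rpow_add ht]; ring_nf
    have hq0 : 0 < t ^ (q - δ) := Real.rpow_pos_of_pos ht _
    rw [hm t]
    calc A * t ^ (p - δ) + B * t ^ (q - δ) - D * t ^ (r - δ)
        ≤ (A + B) * t ^ (q - δ) - (A + B + 1) * t ^ (q - δ) := by
          rw [e2]
          have hle : (A + B + 1) * t ^ (q - δ) ≤ D * t ^ (r - q) * t ^ (q - δ) :=
            mul_le_mul_of_nonneg_right htD hq0.le
          nlinarith [mul_le_mul_of_nonneg_left e1 hA.le]
      _ = -(t ^ (q - δ)) := by ring
  -- uniqueness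
  refine ⟨tmax, htmax, hmono, hanti, ?_, hmpos, hbot, ?_⟩
  · rw [(hderiv tmax htmax).deriv, hktmax, mul_zero]
  · intro t' ht' hmono' hanti'
    by_contra hne
    rcases lt_or_gt_of_ne hne with h | h
    · have h1 := hanti' (Set.mem_Ici.2 (le_refl t')) (Set.mem_Ici.2 h.le) h
      have h2 := hmono ⟨ht', h.le⟩ ⟨htmax, le_refl _⟩ h
      linarith
    · have h1 := hanti (Set.mem_Ici.2 (le_refl tmax)) (Set.mem_Ici.2 h.le) h
      have h2 := hmono' ⟨htmax, h.le⟩ ⟨ht', le_refl _⟩ h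
      linarith
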